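/- Fix 0 < δ < 1 and θ > 0, write f(x) := ₂F₁(1,-δ;1-δ;-x) = 1 + ∫₁^∞ (1 - 1/(1 + x·s^{-1/δ})) ds, and fix λ₂, P₂ > 0. Define M₁(B) := 1/(f(θ) + λ₂(P₂B)^δ f(θ/B)) + 1/(f(θ) + λ₂⁻¹(P₂B)^{-δ} f(θB)) for B > 0. Then M₁ is differentiable at B = 1 and M₁'(1) = 0. -/

import Mathlib

open MeasureTheory Set

/-- f(x) = ₂F₁(1, -δ; 1-δ; -x) via its integral representation. -/
noncomputable def hyp1 (δ x : ℝ) : ℝ :=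
  1 + ∫ s in Ioi (1 : ℝ), (1 - (1 + x * s ^ (-1 / δ))⁻¹)

lemma tpos {δ : ℝ} {s : ℝ} (hs : s ∈ Ioi (1:ℝ)) : 0 < s ^ (-1/δ) :=
  Real.rpow_pos_of_pos (lt_trans one_pos hs) _

lemma t_int {δ : ℝ} (hδ : 0 < δ) (hδ1 : δ < 1) :
    IntegrableOn (fun s : ℝ => s ^ (-1/δ)) (Ioi 1) := by
  apply integrableOn_Ioi_rpow_of_lt _ one_pos
  rw [div_lt_iff₀ hδ] at *
  nlinarith

lemma hyp1_hasDerivAt (δ : ℝ) (hδ : 0 < δ) (hδ1 : δ < 1) {x : ℝ} (hx : 0 < x) :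
    HasDerivAt (hyp1 δ)
      (∫ s in Ioi (1:ℝ), s ^ (-1/δ) / (1 + x * s ^ (-1/δ)) ^ 2) x := by
  have hmeas : ∀ y : ℝ, AEStronglyMeasurable
      (fun s : ℝ => 1 - (1 + y * s ^ (-1/δ))⁻¹) (volume.restrict (Ioi 1)) := by
    intro y
    apply Measurable.aestronglyMeasurable
    fun_prop
  have hmeas' : AEStronglyMeasurable
      (fun s : ℝ => s ^ (-1/δ) / (1 + x * s ^ (-1/δ)) ^ 2) (volume.restrict (Ioi 1)) := by
    apply Measurable.aestronglyMeasurable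
    fun_prop
  have hint : Integrable (fun s : ℝ => 1 - (1 + x * s ^ (-1/δ))⁻¹) (volume.restrict (Ioi 1)) := by
    apply Integrable.mono ((t_int hδ hδ1).const_mul x) (hmeas x)
    filter_upwards [ae_restrict_mem measurableSet_Ioi] with s hs
    have ht := tpos (δ := δ) hs
    have h1 : (0:ℝ) < 1 + x * s ^ (-1/δ) := by positivity
    have hle : (1 + x * s ^ (-1/δ))⁻¹ ≤ 1 := inv_le_one_of_one_le₀ (by nlinarith)
    have hpos : 0 < (1 + x * s ^ (-1/δ))⁻¹ := by positivity
    rw [Real.norm_eq_abs, Real.norm_eq_abs,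
      abs_of_nonneg (by positivity : (0:ℝ) ≤ x * s ^ (-1/δ)),
      abs_of_nonneg (by linarith : (0:ℝ) ≤ 1 - (1 + x * s ^ (-1/δ))⁻¹)]
    have h2 : 1 - (1 + x * s ^ (-1/δ))⁻¹ = x * s ^ (-1/δ) / (1 + x * s ^ (-1/δ)) := by
      rw [eq_div_iff h1.ne', sub_mul, inv_mul_cancel₀ h1.ne']; ring
    rw [h2, div_le_iff₀ h1]
    nlinarith [mul_pos hx ht, sq_nonneg (x * s ^ (-1/δ))]
  have hbound : ∀ᵐ s ∂(volume.restrict (Ioi (1:ℝ))), ∀ y ∈ Metric.ball x (x/2),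
      ‖s ^ (-1/δ) / (1 + y * s ^ (-1/δ)) ^ 2‖ ≤ s ^ (-1/δ) := by
    filter_upwards [ae_restrict_mem measurableSet_Ioi] with s hs y hy
    have ht := tpos (δ := δ) hs
    have hy' : 0 < y := by
      have := abs_lt.mp (mem_ball_iff_norm.mp hy); linarith [this.1]
    have h1 : (1:ℝ) ≤ 1 + y * s ^ (-1/δ) := by nlinarith
    rw [Real.norm_eq_abs, abs_of_nonneg (by positivity)]
    rw [div_le_iff₀ (by positivity)]
    have h2 : 1 ≤ (1 + y * s ^ (-1/δ)) ^ 2 := by nlinarith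
    nlinarith [mul_le_mul_of_nonneg_left h2 ht.le]
  have hdiff : ∀ᵐ s ∂(volume.restrict (Ioi (1:ℝ))), ∀ y ∈ Metric.ball x (x/2),
      HasDerivAt (fun y => 1 - (1 + y * s ^ (-1/δ))⁻¹)
        (s ^ (-1/δ) / (1 + y * s ^ (-1/δ)) ^ 2) y := by
    filter_upwards [ae_restrict_mem measurableSet_Ioi] with s hs y hy
    have ht := tpos (δ := δ) hs
    have hy' : 0 < y := by
      have := abs_lt.mp (mem_ball_iff_norm.mp hy); linarith [this.1]
    have h1 : (0:ℝ) < 1 + y * s ^ (-1/δ) := by positivity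
    have hd : HasDerivAt (fun y : ℝ => 1 + y * s ^ (-1/δ)) (s ^ (-1/δ)) y := by
      simpa using ((hasDerivAt_id y).mul_const (s ^ (-1/δ))).const_add 1
    have := hd.inv h1.ne'
    have h2 := (hasDerivAt_const y (1:ℝ)).sub this
    refine h2.congr_deriv ?_
    ring
  have key := hasDerivAt_integral_of_dominated_loc_of_deriv_le (μ := volume.restrict (Ioi 1))
    (F := fun y s => 1 - (1 + y * s ^ (-1/δ))⁻¹)
    (F' := fun y s => s ^ (-1/δ) / (1 + y * s ^ (-1/δ)) ^ 2)
    (Metric.ball_mem_nhds x (half_pos hx)) (Filter.Eventually.of_forall hmeas) hint hmeas' hbound (t_int hδ hδ1) hdiff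
  have := (hasDerivAt_const x (1:ℝ)).add key.2
  exact this.congr_deriv (zero_add _)

lemma hyp1_one_le (δ : ℝ) (hδ : 0 < δ) {x : ℝ} (hx : 0 ≤ x) : 1 ≤ hyp1 δ x := by
  have : 0 ≤ ∫ s in Ioi (1:ℝ), (1 - (1 + x * s ^ (-1 / δ))⁻¹) := by
    apply setIntegral_nonneg measurableSet_Ioi
    intro s hs
    have ht := tpos (δ := δ) hs
    have : (1 + x * s ^ (-1/δ))⁻¹ ≤ 1 := inv_le_one_of_one_le₀ (by nlinarith)
    linarith
  simp only [hyp1]; linarith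

theorem stmt14 (δ θ lam2 P₂ : ℝ) (hδ : 0 < δ) (hδ1 : δ < 1) (hθ : 0 < θ)
    (hlam : 0 < lam2) (hP : 0 < P₂) :
    HasDerivAt (fun B : ℝ =>
        1 / (hyp1 δ θ + lam2 * (P₂ * B) ^ δ * hyp1 δ (θ / B)) +
          1 / (hyp1 δ θ + lam2⁻¹ * (P₂ * B) ^ (-δ) * hyp1 δ (θ * B)))
      0 1 := by
  set d : ℝ := ∫ s in Ioi (1:ℝ), s ^ (-1/δ) / (1 + θ * s ^ (-1/δ)) ^ 2 with hd_def
  have hd : HasDerivAt (hyp1 δ) d θ := hyp1_hasDerivAt δ hδ hδ1 hθ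
  set f0 : ℝ := hyp1 δ θ with hf0_def
  have hf0 : 0 < f0 := lt_of_lt_of_le one_pos (hyp1_one_le δ hδ hθ.le)
  -- inner maps
  have hq1 : HasDerivAt (fun B : ℝ => θ / B) (-θ) 1 := by
    have := (hasDerivAt_inv (one_ne_zero)).const_mul θ
    simpa [div_eq_mul_inv] using this
  have hq2 : HasDerivAt (fun B : ℝ => θ * B) θ 1 := by
    simpa using (hasDerivAt_id (1:ℝ)).const_mul θ
  have hc1 : HasDerivAt (fun B : ℝ => hyp1 δ (θ / B)) (d * (-θ)) 1 := by
    have hd' : HasDerivAt (hyp1 δ) d ((fun B : ℝ => θ / B) 1) := by simpa using hd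
    exact hd'.comp 1 hq1
  have hc2 : HasDerivAt (fun B : ℝ => hyp1 δ (θ * B)) (d * θ) 1 := by
    have hd' : HasDerivAt (hyp1 δ) d ((fun B : ℝ => θ * B) 1) := by simpa using hd
    exact hd'.comp 1 hq2
  have hPB : HasDerivAt (fun B : ℝ => P₂ * B) P₂ 1 := by
    simpa using (hasDerivAt_id (1:ℝ)).const_mul P₂
  have hpow1 : HasDerivAt (fun B : ℝ => (P₂ * B) ^ δ) (δ * P₂ ^ δ) 1 := by
    have h := (Real.hasDerivAt_rpow_const (x := P₂ * 1) (p := δ)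
      (Or.inl (by positivity))).comp 1 hPB
    refine h.congr_deriv ?_
    rw [mul_one, Real.rpow_sub_one hP.ne']
    field_simp
    try ring
  have hpow2 : HasDerivAt (fun B : ℝ => (P₂ * B) ^ (-δ)) (-δ * P₂ ^ (-δ)) 1 := by
    have h := (Real.hasDerivAt_rpow_const (x := P₂ * 1) (p := -δ)
      (Or.inl (by positivity))).comp 1 hPB
    refine h.congr_deriv ?_
    rw [mul_one, Real.rpow_sub_one hP.ne']
    field_simp
    try ring
  -- denominators
  have hu : HasDerivAt (fun B : ℝ => f0 + lam2 * (P₂ * B) ^ δ * hyp1 δ (θ / B))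
      (lam2 * (δ * P₂ ^ δ) * f0 + lam2 * P₂ ^ δ * (d * (-θ))) 1 := by
    have h := ((hpow1.const_mul lam2).mul hc1).const_add f0
    simpa using h
  have hv : HasDerivAt (fun B : ℝ => f0 + lam2⁻¹ * (P₂ * B) ^ (-δ) * hyp1 δ (θ * B))
      (lam2⁻¹ * (-δ * P₂ ^ (-δ)) * f0 + lam2⁻¹ * P₂ ^ (-δ) * (d * θ)) 1 := by
    have h := ((hpow2.const_mul lam2⁻¹).mul hc2).const_add f0
    simpa using h
  have hD1 : f0 + lam2 * (P₂ * 1) ^ δ * hyp1 δ (θ / 1) = f0 * (1 + lam2 * P₂ ^ δ) := by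
    rw [mul_one, div_one, ← hf0_def]; ring
  have hD1ne : f0 + lam2 * (P₂ * 1) ^ δ * hyp1 δ (θ / 1) ≠ 0 := by
    rw [hD1]; positivity
  have hD2 : f0 + lam2⁻¹ * (P₂ * 1) ^ (-δ) * hyp1 δ (θ * 1) = f0 * (1 + lam2⁻¹ * P₂ ^ (-δ)) := by
    rw [mul_one, mul_one, ← hf0_def]; ring
  have hD2ne : f0 + lam2⁻¹ * (P₂ * 1) ^ (-δ) * hyp1 δ (θ * 1) ≠ 0 := by
    rw [hD2]; positivity
  have ht1 := (hasDerivAt_const (1:ℝ) (1:ℝ)).div hu hD1ne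
  have ht2 := (hasDerivAt_const (1:ℝ) (1:ℝ)).div hv hD2ne
  have hsum := ht1.add ht2
  refine hsum.congr_deriv ?_
  rw [hD1, hD2]
  have hPne : P₂ ^ (-δ) = (P₂ ^ δ)⁻¹ := by
    rw [Real.rpow_neg hP.le]
  rw [hPne]
  have ha : (0:ℝ) < P₂ ^ δ := Real.rpow_pos_of_pos hP δ
  have h1 : (0:ℝ) < 1 + lam2 * P₂ ^ δ := by positivity
  have h2 : (0:ℝ) < 1 + lam2⁻¹ * (P₂ ^ δ)⁻¹ := by positivity
  field_simp
  ring
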